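/- For any positive integer q and integers a, b, the average over r in [q] of e((a r^2 + b r)/q) has absolute value at most C · gcd(a,q)^{1/2} · q^{-1/2} for some absolute constant C. -/

import Mathlib

open Complex Finset

noncomputable def psi (q : ℕ) (n : ℤ) : ℂ :=
  Complex.exp (2 * Real.pi * Complex.I * ((n : ℂ) / (q : ℂ)))

lemma psi_add (q : ℕ) (m n : ℤ) : psi q (m + n) = psi q m * psi q n := by
  rw [psi, psi, psi, ← Complex.exp_add]
  congr 1
  push_cast
  ring

lemma psi_zero (q : ℕ) : psi q 0 = 1 := by simp [psi]

lemma psi_norm (q : ℕ) (n : ℤ) : ‖psi q n‖ = 1 := by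
  have : (2 * Real.pi * Complex.I * ((n : ℂ) / (q : ℂ)))
      = ((2 * Real.pi * n / q : ℝ) : ℂ) * Complex.I := by
    push_cast; ring
  rw [psi, this, Complex.norm_exp_ofReal_mul_I]

lemma psi_congr {q : ℕ} (hq : 0 < q) {m n : ℤ} (h : (m : ZMod q) = (n : ZMod q)) :
    psi q m = psi q n := by
  rw [ZMod.intCast_eq_intCast_iff] at h
  obtain ⟨k, hk⟩ : (q : ℤ) ∣ m - n := Int.ModEq.dvd h.symm
  have hm : m = n + q * k := by linarith
  have hqC : (q : ℂ) ≠ 0 := Nat.cast_ne_zero.mpr hq.ne'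
  rw [hm, psi_add]
  have : psi q ((q : ℤ) * k) = 1 := by
    rw [psi]
    have : 2 * (Real.pi : ℂ) * Complex.I * ((((q : ℤ) * k : ℤ) : ℂ) / (q : ℂ))
        = (k : ℤ) * (2 * Real.pi * Complex.I) := by
      push_cast
      field_simp
    rw [this, Complex.exp_int_mul_two_pi_mul_I]
  rw [this, mul_one]

lemma psi_pow (q : ℕ) (c : ℤ) (j : ℕ) : psi q c ^ j = psi q (c * j) := by
  induction j with
  | zero => simp [psi_zero]
  | succ j ih =>
      rw [pow_succ, ih, ← psi_add]
      congr 1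
      push_cast
      ring

lemma psi_ne_one {q : ℕ} (hq : 0 < q) {c : ℤ} (hc : (c : ZMod q) ≠ 0) :
    psi q c ≠ 1 := by
  intro h
  apply hc
  rw [psi, Complex.exp_eq_one_iff] at h
  obtain ⟨n, hn⟩ := h
  have hqC : (q : ℂ) ≠ 0 := Nat.cast_ne_zero.mpr hq.ne'
  have h2 : (c : ℂ) = n * q := by
    have hpi : (2 * (Real.pi : ℂ) * Complex.I) ≠ 0 := by
      simp [Real.pi_ne_zero, Complex.I_ne_zero]
    have hn' : 2 * (Real.pi : ℂ) * Complex.I * ((c : ℂ) / (q : ℂ))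
        = 2 * (Real.pi : ℂ) * Complex.I * (n : ℂ) := by rw [hn]; ring
    have h3 : (c : ℂ) / (q : ℂ) = (n : ℂ) := mul_left_cancel₀ hpi hn'
    field_simp at h3
    rw [h3, mul_comm]
  have : c = n * q := by exact_mod_cast h2
  rw [ZMod.intCast_zmod_eq_zero_iff_dvd]
  exact ⟨n, by linarith⟩
lemma zmod_sum_eq {q : ℕ} [NeZero q] (hq : 0 < q) (f : ℕ → ℂ) :
    ∑ y : ZMod q, f y.val = ∑ j ∈ range q, f j := by
  refine Finset.sum_nbij' (fun y => y.val) (fun j => (j : ZMod q)) ?_ ?_ ?_ ?_ ?_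
  · intro y _; exact mem_range.mpr (ZMod.val_lt y)
  · intro j _; exact mem_univ _
  · intro y _; exact ZMod.natCast_rightInverse y
  · intro j hj; exact ZMod.val_cast_of_lt (mem_range.mp hj)
  · intro y _; rfl

lemma sum_psi_mul {q : ℕ} [NeZero q] (hq : 0 < q) (c : ℤ) :
    ∑ y : ZMod q, psi q (c * (y.val : ℤ)) =
      if (c : ZMod q) = 0 then (q : ℂ) else 0 := by
  rw [zmod_sum_eq hq (fun j => psi q (c * (j : ℤ)))]
  split_ifs with h
  · have : ∀ j ∈ range q, psi q (c * (j : ℤ)) = 1 := by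
      intro j _
      rw [show (1 : ℂ) = psi q 0 from (psi_zero q).symm]
      apply psi_congr hq
      push_cast
      rw [h, zero_mul]
    rw [Finset.sum_congr rfl this]
    simp
  · have h1 : ∀ j ∈ range q, psi q (c * (j : ℤ)) = psi q c ^ j := by
      intro j _; rw [psi_pow]
    rw [Finset.sum_congr rfl h1, geom_sum_eq (psi_ne_one hq h)]
    have : psi q c ^ q = 1 := by
      rw [psi_pow, show (1:ℂ) = psi q 0 from (psi_zero q).symm]
      apply psi_congr hq
      push_cast
      ring_nf
      simp
    rw [this, sub_self, zero_div]
lemma count_le {q : ℕ} [NeZero q] (hq : 0 < q) (c : ℤ) :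
    ((Finset.univ.filter fun h : ZMod q => (c : ZMod q) * h = 0)).card ≤ Int.gcd c q := by
  set g : ℕ := Int.gcd c q with hg
  have hgpos : 0 < g := Int.gcd_pos_iff.mpr (Or.inr (by exact_mod_cast hq.ne'))
  have hgdvdq : g ∣ q := by
    have : (g : ℤ) ∣ (q : ℤ) := Int.gcd_dvd_right _ _
    exact_mod_cast this
  set q' : ℕ := q / g with hq'
  have hqeq : q = g * q' := (Nat.mul_div_cancel' hgdvdq).symm
  have hq'pos : 0 < q' := Nat.div_pos (Nat.le_of_dvd hq hgdvdq) hgpos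
  have key : ∀ h : ZMod q, (c : ZMod q) * h = 0 → q' ∣ h.val := by
    intro h hcond
    have h1 : ((c * (h.val : ℤ) : ℤ) : ZMod q) = 0 := by
      rw [Int.cast_mul, Int.cast_natCast, ZMod.natCast_rightInverse h, hcond]
    have h2 : (q : ℤ) ∣ c * (h.val : ℤ) := (ZMod.intCast_zmod_eq_zero_iff_dvd _ _).mp h1
    have hgz : (g : ℤ) ≠ 0 := by exact_mod_cast hgpos.ne'
    have hcg : (g : ℤ) ∣ c := Int.gcd_dvd_left _ _
    obtain ⟨c', hc'⟩ := hcg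
    have hq2 : (q : ℤ) = g * q' := by exact_mod_cast hqeq
    rw [hq2, hc'] at h2
    have h3 : (q' : ℤ) ∣ c' * (h.val : ℤ) := by
      rcases h2 with ⟨k, hk⟩
      exact ⟨k, by
        have := hk
        rw [show (g:ℤ) * c' * (h.val:ℤ) = (g:ℤ) * (c' * (h.val:ℤ)) by ring] at this
        exact mul_left_cancel₀ hgz (by linarith [this])⟩
    have hcop : IsCoprime (q' : ℤ) c' := by
      have hdiv : Int.gcd (c / g) ((q : ℤ) / g) = 1 := Int.gcd_div_gcd_div_gcd hgpos
      have hc'' : c / (g:ℤ) = c' := by rw [hc']; exact Int.mul_ediv_cancel_left _ hgz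
      have hq'' : (q : ℤ) / (g:ℤ) = (q' : ℤ) := by rw [hq2]; exact Int.mul_ediv_cancel_left _ hgz
      rw [hc'', hq''] at hdiv
      rw [Int.isCoprime_iff_gcd_eq_one, Int.gcd_comm]
      exact hdiv
    have h4 : (q' : ℤ) ∣ (h.val : ℤ) := hcop.dvd_of_dvd_mul_left h3
    exact_mod_cast h4
  have hcard : ((Finset.univ.filter fun h : ZMod q => (c : ZMod q) * h = 0)).card ≤ (range g).card := by
    apply Finset.card_le_card_of_injOn (fun h => h.val / q') ?_ ?_
    · intro h hh
      simp only [mem_filter, mem_univ, true_and, coe_filter, Set.mem_setOf_eq] at hh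
      have := key h hh
      have hlt : h.val < q := ZMod.val_lt h
      show h.val / q' ∈ range g
      rw [mem_range]
      rw [Nat.div_lt_iff_lt_mul hq'pos]
      omega
    · intro h1 hh1 h2 hh2 heq
      simp only [mem_filter, mem_univ, true_and, coe_filter] at hh1 hh2
      have k1 := key h1 hh1
      have k2 := key h2 hh2
      have : h1.val = h2.val := by
        have e1 : h1.val = q' * (h1.val / q') := (Nat.mul_div_cancel' k1).symm
        have e2 : h2.val = q' * (h2.val / q') := (Nat.mul_div_cancel' k2).symm
        simp only at heq
        rw [e1, e2, heq]
      exact ZMod.val_injective q this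
  simpa using hcard

lemma psi_conj (q : ℕ) (n : ℤ) : (starRingEnd ℂ) (psi q n) = psi q (-n) := by
  rw [psi, psi, ← Complex.exp_conj]
  congr 1
  simp [map_mul, map_div₀, Complex.conj_I, map_ofNat]
  push_cast
  ring

theorem gauss_sum_average_bound :
    ∃ C : ℝ, 0 < C ∧ ∀ (q : ℕ), 0 < q → ∀ a b : ℤ,
      ‖(1 / (q : ℂ)) * ∑ r ∈ Finset.Icc 1 q,
          Complex.exp (2 * Real.pi * Complex.I *
            (((a * (r : ℤ) ^ 2 + b * (r : ℤ) : ℤ) : ℝ) / (q : ℝ)))‖ ≤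
        C * Real.sqrt (Int.gcd a (q : ℤ)) / Real.sqrt q := by
  refine ⟨2, by norm_num, ?_⟩
  intro q hq a b
  haveI : NeZero q := ⟨hq.ne'⟩
  set F : ZMod q → ℂ := fun x => psi q (a * (x.val : ℤ) ^ 2 + b * (x.val : ℤ)) with hFdef
  -- step 0: rewrite summand
  have hterm : ∀ r : ℕ, Complex.exp (2 * Real.pi * Complex.I *
      (((a * (r : ℤ) ^ 2 + b * (r : ℤ) : ℤ) : ℝ) / (q : ℝ)))
      = psi q (a * (r : ℤ) ^ 2 + b * (r : ℤ)) := by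
    intro r
    rw [psi]
    norm_cast
  set S : ℂ := ∑ x : ZMod q, F x with hSdef
  -- step 1: the sum over Icc equals the sum over ZMod q
  have hF : ∀ n : ℤ, F ((n : ZMod q)) = psi q (a * n ^ 2 + b * n) := by
    intro n
    apply psi_congr hq
    push_cast
    rw [ZMod.natCast_rightInverse ((n : ZMod q))]
  have hS : (∑ r ∈ Finset.Icc 1 q, psi q (a * (r : ℤ) ^ 2 + b * (r : ℤ))) = S := by
    rw [hSdef]
    refine Finset.sum_nbij' (fun r => ((r : ℕ) : ZMod q))
      (fun x => if x = 0 then q else x.val) ?_ ?_ ?_ ?_ ?_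
    · intro r _; exact Finset.mem_univ _
    · intro x _
      rw [Finset.mem_Icc]
      split_ifs with h
      · exact ⟨hq, le_refl q⟩
      · refine ⟨?_, le_of_lt (ZMod.val_lt x)⟩
        have : x.val ≠ 0 := fun hv => h (by rwa [ZMod.val_eq_zero] at hv)
        omega
    · intro r hr
      rw [Finset.mem_Icc] at hr
      by_cases h : ((r : ℕ) : ZMod q) = 0
      · rw [if_pos h]
        have hd : q ∣ r := (ZMod.natCast_eq_zero_iff r q).mp h
        have h2 : q ≤ r := Nat.le_of_dvd (by omega) hd
        omega
      · rw [if_neg h]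
        have hrq : r ≠ q := by
          intro he; apply h; rw [he]; exact ZMod.natCast_self q
        exact ZMod.val_cast_of_lt (by omega)
    · intro x _
      split_ifs with h
      · rw [ZMod.natCast_self]; exact h.symm
      · exact ZMod.natCast_rightInverse x
    · intro r _
      rw [show ((r : ℕ) : ZMod q) = ((r : ℤ) : ZMod q) by push_cast; rfl, hF]
  -- step 2: conjugate-square identity
  have hstep : ∀ y h : ZMod q, F (y + h) * (starRingEnd ℂ) (F y)
      = psi q (2 * a * (h.val : ℤ) * (y.val : ℤ))
        * psi q (a * (h.val : ℤ) ^ 2 + b * (h.val : ℤ)) := by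
    intro y h
    rw [hFdef]
    simp only []
    rw [psi_conj, ← psi_add, ← psi_add]
    apply psi_congr hq
    push_cast
    rw [ZMod.natCast_rightInverse (y + h), ZMod.natCast_rightInverse y,
      ZMod.natCast_rightInverse h]
    ring
  have hsq : S * (starRingEnd ℂ) S
      = ∑ h : ZMod q, (psi q (a * (h.val : ℤ) ^ 2 + b * (h.val : ℤ)) *
          if ((2 * a : ℤ) : ZMod q) * h = 0 then (q : ℂ) else 0) := by
    rw [hSdef, map_sum, Finset.sum_mul_sum]
    -- now : ∑ x, ∑ y, F x * conj (F y)
    rw [Finset.sum_comm]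
    have inner : ∀ y : ZMod q, ∑ x : ZMod q, F x * (starRingEnd ℂ) (F y)
        = ∑ h : ZMod q, F (y + h) * (starRingEnd ℂ) (F y) := by
      intro y
      exact (Fintype.sum_equiv (Equiv.addLeft y) _ _ (fun h => rfl)).symm
    rw [Finset.sum_congr rfl (fun y _ => inner y), Finset.sum_comm]
    refine Finset.sum_congr rfl (fun h _ => ?_)
    rw [Finset.sum_congr rfl (fun y _ => hstep y h)]
    rw [← Finset.sum_mul, mul_comm]
    congr 1
    have hcast : (((2 * a * (h.val : ℤ)) : ℤ) : ZMod q) = ((2 * a : ℤ) : ZMod q) * h := by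
      push_cast
      rw [ZMod.natCast_rightInverse h]
    rw [sum_psi_mul hq (2 * a * (h.val : ℤ)), hcast]
  -- step 3: norm bound on S^2
  set N : ℕ := (Finset.univ.filter fun h : ZMod q => ((2 * a : ℤ) : ZMod q) * h = 0).card
    with hNdef
  have hnormsq : ‖S‖ ^ 2 ≤ (q : ℝ) * N := by
    have h1 : ‖S * (starRingEnd ℂ) S‖ = (‖S‖ ^ 2 : ℝ) := by
      rw [Complex.mul_conj]
      simp [Complex.normSq_eq_norm_sq]
    rw [← h1, hsq]
    calc ‖∑ h : ZMod q, (psi q (a * (h.val : ℤ) ^ 2 + b * (h.val : ℤ)) *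
          if ((2 * a : ℤ) : ZMod q) * h = 0 then (q : ℂ) else 0)‖
        ≤ ∑ h : ZMod q, ‖psi q (a * (h.val : ℤ) ^ 2 + b * (h.val : ℤ)) *
          if ((2 * a : ℤ) : ZMod q) * h = 0 then (q : ℂ) else 0‖ := norm_sum_le _ _
      _ = ∑ h : ZMod q, (if ((2 * a : ℤ) : ZMod q) * h = 0 then (q : ℝ) else 0) := by
          refine Finset.sum_congr rfl (fun h _ => ?_)
          rw [norm_mul, psi_norm, one_mul]
          split_ifs <;> simp
      _ = (q : ℝ) * N := by
          rw [← Finset.sum_filter, Finset.sum_const, nsmul_eq_mul]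
          rw [mul_comm]
  -- step 4: N ≤ 2 * gcd a q
  have hN : (N : ℝ) ≤ 2 * (Int.gcd a q : ℝ) := by
    have h1 : N ≤ Int.gcd (2 * a) q := count_le hq (2 * a)
    have h2 : Int.gcd (2 * a) q ∣ 2 * Int.gcd a q := by
      have hd1 : ((Int.gcd (2 * a) q : ℤ)) ∣ 2 * a := Int.gcd_dvd_left _ _
      have hd2 : ((Int.gcd (2 * a) q : ℤ)) ∣ 2 * q := Dvd.dvd.mul_left (Int.gcd_dvd_right _ _) 2
      have := Int.dvd_gcd hd1 hd2
      rw [Int.gcd_mul_left] at this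
      exact_mod_cast this
    have hgpos : 0 < 2 * Int.gcd a q := by
      have : 0 < Int.gcd a q := Int.gcd_pos_iff.mpr (Or.inr (by exact_mod_cast hq.ne'))
      omega
    have := Nat.le_of_dvd hgpos h2
    exact_mod_cast le_trans h1 this
  -- step 5: conclude
  have hq0 : (0 : ℝ) < q := by exact_mod_cast hq
  have hSb : ‖S‖ ≤ 2 * Real.sqrt (Int.gcd a q) * Real.sqrt q := by
    have h1 : ‖S‖ ^ 2 ≤ (2 * Real.sqrt (Int.gcd a q) * Real.sqrt q) ^ 2 := by
      have hrhs : (2 * Real.sqrt (Int.gcd a q) * Real.sqrt q) ^ 2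
          = 4 * (Int.gcd a q : ℝ) * q := by
        rw [mul_pow, mul_pow, Real.sq_sqrt (by positivity), Real.sq_sqrt hq0.le]
        norm_num
      rw [hrhs]
      calc ‖S‖ ^ 2 ≤ (q : ℝ) * N := hnormsq
        _ ≤ (q : ℝ) * (2 * (Int.gcd a q : ℝ)) := by
            apply mul_le_mul_of_nonneg_left hN hq0.le
        _ ≤ 4 * (Int.gcd a q : ℝ) * q := by nlinarith [hq0.le, (Nat.cast_nonneg (Int.gcd a (q:ℤ)) : (0:ℝ) ≤ _)]
    have h2 : (0 : ℝ) ≤ 2 * Real.sqrt (Int.gcd a q) * Real.sqrt q := by positivity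
    nlinarith [norm_nonneg S]
  rw [Finset.sum_congr rfl (fun r _ => hterm r), hS, norm_mul]
  rw [norm_div, norm_one, Complex.norm_natCast]
  rw [div_mul_eq_mul_div, one_mul]
  rw [div_le_div_iff₀ hq0 (by positivity : (0:ℝ) < Real.sqrt q)]
  calc ‖S‖ * Real.sqrt q ≤ (2 * Real.sqrt (Int.gcd a q) * Real.sqrt q) * Real.sqrt q :=
        mul_le_mul_of_nonneg_right hSb (Real.sqrt_nonneg _)
    _ = 2 * Real.sqrt (Int.gcd a q) * q := by
        rw [mul_assoc, Real.mul_self_sqrt hq0.le]
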